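/- Let f : 2^N → ℝ be a non-negative submodular set function on a finite set N, and let y ∈ [0,1]^(2^N). Then the set function g_y : 2^N → ℝ defined by g_y(A) = F(χ_A ∨ y) is non-negative and submodular. Moreover, if f is monotone, then g_y is monotone. -/
import Mathlib


open scoped Classical

/-- A matroid on a finite ground set, given by its independent sets. -/
structure FinMatroid (α : Type*) [Fintype α] [DecidableEq α] where
  Indep : Finset α → Prop
  indep_empty : Indep ∅
  indep_subset : ∀ ⦃S T : Finset α⦄, Indep T → S ⊆ T → Indep S
  indep_exchange : ∀ ⦃S T : Finset α⦄, Indep S → Indep T → S.card < T.card →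
    ∃ u ∈ T \ S, Indep (insert u S)

variable {α : Type*} [Fintype α] [DecidableEq α]

/-- The rank of a set `A`: the maximum size of an independent subset of `A`. -/
noncomputable def FinMatroid.rank (M : FinMatroid α) (A : Finset α) : ℕ :=
  (A.powerset.filter fun S => M.Indep S).sup Finset.card

/-- A base of a matroid: an inclusion-wise maximal independent set. -/
def FinMatroid.IsBase (M : FinMatroid α) (B : Finset α) : Prop :=
  M.Indep B ∧ ∀ T : Finset α, M.Indep T → B ⊆ T → T = B

/-- The extended multilinear extension of a set function `f`, evaluated at a
vector `y` with one coordinate for each subset of the ground set. -/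
noncomputable def extMulti (f : Finset α → ℝ) (y : Finset α → ℝ) : ℝ :=
  ∑ J : Finset (Finset α), f (J.sup id) * ((∏ S ∈ J, y S) * ∏ S ∈ Jᶜ, (1 - y S))

/-- The standard multilinear extension of a set function `f`. -/
noncomputable def stdMulti (f : Finset α → ℝ) (x : α → ℝ) : ℝ :=
  ∑ S : Finset α, f S * ((∏ u ∈ S, x u) * ∏ u ∈ Sᶜ, (1 - x u))

/-- The marginal vector of `y`: `marg y u = 1 - ∏_{S ∋ u} (1 - y S)`. -/
noncomputable def marg (y : Finset α → ℝ) (u : α) : ℝ :=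
  1 - ∏ S ∈ Finset.univ.filter (fun S : Finset α => u ∈ S), (1 - y S)

/-- The characteristic vector of the coordinate indexed by the set `A`. -/
def chi (A : Finset α) : Finset α → ℝ := fun S => if S = A then 1 else 0

/-- The coordinate-wise probabilistic sum of two vectors. -/
def psum {ι : Type*} (a b : ι → ℝ) : ι → ℝ := fun i => 1 - (1 - a i) * (1 - b i)

/-- Membership of `x` in the matroid polytope `P(M)`. -/
def inMatroidPolytope (M : FinMatroid α) (x : α → ℝ) : Prop :=
  (∀ u, 0 ≤ x u) ∧ ∀ A : Finset α, ∑ u ∈ A, x u ≤ (M.rank A : ℝ)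

lemma extMulti_chi_max (f : Finset α → ℝ) (y : Finset α → ℝ)
    (hy : ∀ S, 0 ≤ y S ∧ y S ≤ 1) (A : Finset α) :
    extMulti f (fun S => max (chi A S) (y S)) =
    ∑ J : Finset (Finset α), f (A ∪ J.sup id) *
      ((∏ S ∈ J, y S) * ∏ S ∈ Jᶜ, (1 - y S)) := by
  classical
  have hyA : max (chi A A) (y A) = 1 := by
    simp [chi, max_eq_left (hy A).2]
  have hyS : ∀ S, S ≠ A → max (chi A S) (y S) = y S := by
    intro S hS; simp [chi, hS, max_eq_right (hy S).1]
  unfold extMulti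
  rw [← Finset.sum_filter_add_sum_filter_not Finset.univ (fun J : Finset (Finset α) => A ∈ J)
      (fun J => f (J.sup id) * ((∏ S ∈ J, max (chi A S) (y S)) * ∏ S ∈ Jᶜ, (1 - max (chi A S) (y S)))),
    ← Finset.sum_filter_add_sum_filter_not Finset.univ (fun J : Finset (Finset α) => A ∈ J)
      (fun J => f (A ∪ J.sup id) * ((∏ S ∈ J, y S) * ∏ S ∈ Jᶜ, (1 - y S)))]
  have hz : ∑ J ∈ Finset.univ.filter (fun J : Finset (Finset α) => ¬ A ∈ J),
      f (J.sup id) * ((∏ S ∈ J, max (chi A S) (y S)) * ∏ S ∈ Jᶜ, (1 - max (chi A S) (y S))) = 0 := by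
    apply Finset.sum_eq_zero
    intro J hJ
    rw [Finset.mem_filter] at hJ
    have hA : A ∈ Jᶜ := Finset.mem_compl.mpr hJ.2
    rw [Finset.prod_eq_zero hA (by rw [hyA]; ring)]
    ring
  rw [hz, add_zero]
  have h2 : ∑ J ∈ Finset.univ.filter (fun J : Finset (Finset α) => ¬ A ∈ J),
      f (A ∪ J.sup id) * ((∏ S ∈ J, y S) * ∏ S ∈ Jᶜ, (1 - y S)) =
      ∑ J ∈ Finset.univ.filter (fun J : Finset (Finset α) => A ∈ J),
      f (J.sup id) * ((∏ S ∈ J.erase A, y S) * ((1 - y A) * ∏ S ∈ Jᶜ, (1 - y S))) := by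
    refine Finset.sum_bij' (fun J _ => insert A J) (fun J _ => J.erase A) ?_ ?_ ?_ ?_ ?_
    · intro J hJ
      simp only [Finset.mem_filter, Finset.mem_univ, true_and] at hJ ⊢
      exact Finset.mem_insert_self A J
    · intro J hJ
      simp only [Finset.mem_filter, Finset.mem_univ, true_and] at hJ ⊢
      simp
    · intro J hJ
      simp only [Finset.mem_filter, Finset.mem_univ, true_and] at hJ
      exact Finset.erase_insert hJ
    · intro J hJ
      simp only [Finset.mem_filter, Finset.mem_univ, true_and] at hJ
      exact Finset.insert_erase hJ
    · intro J hJ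
      simp only [Finset.mem_filter, Finset.mem_univ, true_and] at hJ
      have hsup : (insert A J).sup id = A ∪ J.sup id := by
        rw [Finset.sup_insert]; rfl
      have herase : (insert A J).erase A = J := Finset.erase_insert hJ
      have hcomp : (insert A J)ᶜ = Jᶜ.erase A := Finset.compl_insert
      have hAc : A ∈ Jᶜ := Finset.mem_compl.mpr hJ
      have hprod : ∏ S ∈ Jᶜ, (1 - y S) = (1 - y A) * ∏ S ∈ Jᶜ.erase A, (1 - y S) :=
        (Finset.mul_prod_erase Jᶜ _ hAc).symm
      rw [hsup, herase, hcomp, hprod]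
  rw [h2, ← Finset.sum_add_distrib]
  apply Finset.sum_congr rfl
  intro J hJ
  rw [Finset.mem_filter] at hJ
  have hA : A ∈ J := hJ.2
  have hU : A ∪ J.sup id = J.sup id :=
    Finset.union_eq_right.mpr (Finset.le_sup (f := id) hA)
  have hpr : ∏ S ∈ J, max (chi A S) (y S) = ∏ S ∈ J.erase A, y S := by
    rw [← Finset.mul_prod_erase J _ hA, hyA, one_mul]
    exact Finset.prod_congr rfl fun S hS => hyS S (Finset.ne_of_mem_erase hS)
  have hpr2 : ∏ S ∈ Jᶜ, (1 - max (chi A S) (y S)) = ∏ S ∈ Jᶜ, (1 - y S) := by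
    apply Finset.prod_congr rfl
    intro S hS
    have : S ≠ A := by rintro rfl; exact (Finset.mem_compl.mp hS) hA
    rw [hyS S this]
  have hpr3 : ∏ S ∈ J, y S = y A * ∏ S ∈ J.erase A, y S :=
    (Finset.mul_prod_erase J _ hA).symm
  rw [hU, hpr, hpr2, hpr3]
  ring

theorem gvec_nonneg_submodular_monotone (f : Finset α → ℝ)
    (hf_nonneg : ∀ S, 0 ≤ f S)
    (hf_submod : ∀ S T : Finset α, f (S ∪ T) + f (S ∩ T) ≤ f S + f T)
    (y : Finset α → ℝ) (hy : ∀ S, 0 ≤ y S ∧ y S ≤ 1) :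
    (∀ A : Finset α, 0 ≤ extMulti f (fun S => max (chi A S) (y S))) ∧
    (∀ A B : Finset α,
        extMulti f (fun S => max (chi (A ∪ B) S) (y S)) +
          extMulti f (fun S => max (chi (A ∩ B) S) (y S)) ≤
        extMulti f (fun S => max (chi A S) (y S)) +
          extMulti f (fun S => max (chi B S) (y S))) ∧
    ((∀ S T : Finset α, S ⊆ T → f S ≤ f T) →
      ∀ A B : Finset α, A ⊆ B →
        extMulti f (fun S => max (chi A S) (y S)) ≤
          extMulti f (fun S => max (chi B S) (y S))) := by
  have hw : ∀ J : Finset (Finset α),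
      0 ≤ (∏ S ∈ J, y S) * ∏ S ∈ Jᶜ, (1 - y S) := fun J =>
    mul_nonneg (Finset.prod_nonneg fun S _ => (hy S).1)
      (Finset.prod_nonneg fun S _ => by linarith [(hy S).2])
  refine ⟨?_, ?_, ?_⟩
  · intro A
    rw [extMulti_chi_max f y hy A]
    exact Finset.sum_nonneg fun J _ => mul_nonneg (hf_nonneg _) (hw J)
  · intro A B
    rw [extMulti_chi_max f y hy A, extMulti_chi_max f y hy B,
      extMulti_chi_max f y hy (A ∪ B), extMulti_chi_max f y hy (A ∩ B),
      ← Finset.sum_add_distrib, ← Finset.sum_add_distrib]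
    apply Finset.sum_le_sum
    intro J _
    rw [← add_mul, ← add_mul]
    apply mul_le_mul_of_nonneg_right _ (hw J)
    have h := hf_submod (A ∪ J.sup id) (B ∪ J.sup id)
    have e1 : (A ∪ J.sup id) ∪ (B ∪ J.sup id) = (A ∪ B) ∪ J.sup id := by
      ext x; simp only [Finset.mem_union]; tauto
    have e2 : (A ∪ J.sup id) ∩ (B ∪ J.sup id) = (A ∩ B) ∪ J.sup id := by
      ext x; simp only [Finset.mem_union, Finset.mem_inter]; tauto
    rw [e1, e2] at h
    linarith
  · intro hmono A B hAB
    rw [extMulti_chi_max f y hy A, extMulti_chi_max f y hy B]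
    apply Finset.sum_le_sum
    intro J _
    exact mul_le_mul_of_nonneg_right
      (hmono _ _ (Finset.union_subset_union_left hAB)) (hw J)
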